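/- With k = ℤ/2, C = k[u_1,…,u_n,v_1,…,v_n], s the derivation with s(u_i)=0, s(v_i)=u_i, and A the subring generated by the u_i and v_i^2: the A-algebra B = ker(s) is generated as an A-module by 1 together with the elements s(v_T) for subsets T ⊆ {1,…,n} of cardinality ≥ 2, where v_T = ∏_{i∈T} v_i. -/

import Mathlib

open MvPolynomial

/-- The derivation `s = Σ uᵢ ∂/∂vᵢ` on `C = (ℤ/2)[u₁,…,uₙ,v₁,…,vₙ]`,
determined by `s(uᵢ) = 0` and `s(vᵢ) = uᵢ`.  Here the variable `Sum.inl i`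
is `uᵢ` and `Sum.inr i` is `vᵢ`. -/
noncomputable def sDer (n : ℕ) :
    Derivation (ZMod 2) (MvPolynomial (Fin n ⊕ Fin n) (ZMod 2))
      (MvPolynomial (Fin n ⊕ Fin n) (ZMod 2)) :=
  MvPolynomial.mkDerivation (ZMod 2)
    (Sum.elim (fun _ => 0) (fun i => X (Sum.inl i)))

/-- The subring `A = k[u₁,…,uₙ,v₁²,…,vₙ²]` of `C`. -/
noncomputable def Asub (n : ℕ) : Subalgebra (ZMod 2) (MvPolynomial (Fin n ⊕ Fin n) (ZMod 2)) :=
  Algebra.adjoin (ZMod 2)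
    (Set.range (fun i : Fin n => X (Sum.inl i)) ∪
      Set.range (fun i : Fin n => (X (Sum.inr i) : MvPolynomial (Fin n ⊕ Fin n) (ZMod 2)) ^ 2))

namespace Stmt5Aux

variable {n : ℕ}

/-- abbreviation for the polynomial ring C -/
abbrev Cp (n : ℕ) := MvPolynomial (Fin n ⊕ Fin n) (ZMod 2)

lemma add_self (x : Cp n) : x + x = 0 := by
  have h2 : ((2:ℕ) : ZMod 2) = 0 := by decide
  rw [← two_smul ℕ x, ← Nat.cast_smul_eq_nsmul (ZMod 2), h2, zero_smul]

lemma zmod2_cases (a : ZMod 2) : a = 0 ∨ a = 1 := by fin_cases a <;> [exact Or.inl rfl; exact Or.inr rfl]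

/-- set of indices where the v-exponent is odd -/
def Sset (d : Fin n ⊕ Fin n →₀ ℕ) : Finset (Fin n) :=
  Finset.univ.filter fun i => Odd (d (Sum.inr i))

/-- set of indices where the u-exponent is nonzero -/
def Uset (d : Fin n ⊕ Fin n →₀ ℕ) : Finset (Fin n) :=
  Finset.univ.filter fun i => d (Sum.inl i) ≠ 0

def Mset (d : Fin n ⊕ Fin n →₀ ℕ) : Finset (Fin n) := Uset d ∪ Sset d

@[simp] lemma mem_Sset {d : Fin n ⊕ Fin n →₀ ℕ} {i : Fin n} :
    i ∈ Sset d ↔ Odd (d (Sum.inr i)) := by simp [Sset]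

@[simp] lemma mem_Uset {d : Fin n ⊕ Fin n →₀ ℕ} {i : Fin n} :
    i ∈ Uset d ↔ d (Sum.inl i) ≠ 0 := by simp [Uset]

@[simp] lemma mem_Mset {d : Fin n ⊕ Fin n →₀ ℕ} {i : Fin n} :
    i ∈ Mset d ↔ (d (Sum.inl i) ≠ 0 ∨ Odd (d (Sum.inr i))) := by
  simp [Mset, Finset.mem_union]

/-- remove one `v_i`, add one `u_i` (what `s` does to a monomial) -/
noncomputable def shVU (d : Fin n ⊕ Fin n →₀ ℕ) (i : Fin n) : Fin n ⊕ Fin n →₀ ℕ :=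
  d - Finsupp.single (Sum.inr i) 1 + Finsupp.single (Sum.inl i) 1

/-- remove one `u_i`, add one `v_i` (what the homotopy `h` does) -/
noncomputable def shUV (d : Fin n ⊕ Fin n →₀ ℕ) (i : Fin n) : Fin n ⊕ Fin n →₀ ℕ :=
  d - Finsupp.single (Sum.inl i) 1 + Finsupp.single (Sum.inr i) 1

lemma shVU_apply (d : Fin n ⊕ Fin n →₀ ℕ) (i : Fin n) (x : Fin n ⊕ Fin n) :
    shVU d i x = d x - (if x = Sum.inr i then 1 else 0) + (if x = Sum.inl i then 1 else 0) := by
  simp [shVU, Finsupp.single_apply, eq_comm]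

lemma shUV_apply (d : Fin n ⊕ Fin n →₀ ℕ) (i : Fin n) (x : Fin n ⊕ Fin n) :
    shUV d i x = d x - (if x = Sum.inl i then 1 else 0) + (if x = Sum.inr i then 1 else 0) := by
  simp [shUV, Finsupp.single_apply, eq_comm]

lemma natCast_zmod2 (k : ℕ) : (k : ZMod 2) = if Odd k then 1 else 0 := by
  by_cases hk : Odd k
  · rw [if_pos hk, ← ZMod.natCast_mod, Nat.odd_iff.1 hk, Nat.cast_one]
  · rw [if_neg hk, ← ZMod.natCast_mod]
    rw [Nat.odd_iff] at hk
    have h0 : k % 2 = 0 := by omega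
    rw [h0, Nat.cast_zero]

lemma sDer_monomial (d : Fin n ⊕ Fin n →₀ ℕ) :
    sDer n (monomial d 1) = ∑ i ∈ Sset d, monomial (shVU d i) 1 := by
  rw [sDer, mkDerivation_monomial, one_smul]
  rw [Finsupp.sum_fintype]
  · rw [Fintype.sum_sum_type]
    have h1 : ∀ i : Fin n,
        monomial (d - Finsupp.single (Sum.inl i) 1) ((d (Sum.inl i) : ZMod 2)) •
          (Sum.elim (fun _ => (0 : Cp n)) (fun i => X (Sum.inl i)) (Sum.inl i)) = 0 := by
      intro i; simp
    rw [Finset.sum_congr rfl (fun i _ => h1 i), Finset.sum_const_zero, zero_add]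
    rw [Sset, Finset.sum_filter]
    refine Finset.sum_congr rfl (fun i _ => ?_)
    simp only [Sum.elim_inr]
    rw [natCast_zmod2]
    by_cases hi : Odd (d (Sum.inr i))
    · rw [if_pos hi, if_pos hi, smul_eq_mul, X, monomial_mul, mul_one, shVU]
    · rw [if_neg hi, if_neg hi, monomial_zero, zero_smul]
  · intro x
    rw [Nat.cast_zero, monomial_zero, zero_smul]


/-- the homotopy on a monomial exponent -/
noncomputable def hMon (d : Fin n ⊕ Fin n →₀ ℕ) : Cp n :=
  WithTop.recTopCoe 0
    (fun j => if j ∈ Sset d then 0 else monomial (shUV d j) 1) (Mset d).min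

/-- projection onto constants (in u and odd-v): keeps monomials with no u and even v's -/
noncomputable def piMon (d : Fin n ⊕ Fin n →₀ ℕ) : Cp n :=
  if Mset d = ∅ then monomial d 1 else 0

noncomputable def hmap : Cp n →ₗ[ZMod 2] Cp n :=
  (Finsupp.lsum (ZMod 2) fun d => LinearMap.toSpanSingleton (ZMod 2) (Cp n) (hMon d)) ∘ₗ
    (AddMonoidAlgebra.coeffLinearEquiv (ZMod 2)).toLinearMap

noncomputable def pimap : Cp n →ₗ[ZMod 2] Cp n :=
  (Finsupp.lsum (ZMod 2) fun d => LinearMap.toSpanSingleton (ZMod 2) (Cp n) (piMon d)) ∘ₗ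
    (AddMonoidAlgebra.coeffLinearEquiv (ZMod 2)).toLinearMap

lemma hmap_monomial (d : Fin n ⊕ Fin n →₀ ℕ) (r : ZMod 2) :
    hmap (monomial d r) = r • hMon d :=
  sum_monomial_eq (zero_smul _ _)

lemma pimap_monomial (d : Fin n ⊕ Fin n →₀ ℕ) (r : ZMod 2) :
    pimap (monomial d r) = r • piMon d :=
  sum_monomial_eq (zero_smul _ _)

section shiftsets

variable {d : Fin n ⊕ Fin n →₀ ℕ} {i j : Fin n}

lemma Sset_shVU (hi : i ∈ Sset d) : Sset (shVU d i) = Sset d \ {i} := by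
  rw [mem_Sset, Nat.odd_iff] at hi
  ext x
  simp only [mem_Sset, Finset.mem_sdiff, Finset.mem_singleton, shVU_apply, Nat.odd_iff,
    Sum.inr.injEq, reduceCtorEq, if_false]
  by_cases hx : x = i
  · subst hx; simp [Nat.odd_iff] <;> omega
  · simp [hx, Nat.odd_iff] <;> omega

lemma Mset_shVU (hi : i ∈ Sset d) : Mset (shVU d i) = Mset d := by
  rw [mem_Sset, Nat.odd_iff] at hi
  ext x
  simp only [mem_Mset, shVU_apply, Nat.odd_iff, Sum.inr.injEq, Sum.inl.injEq, reduceCtorEq,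
    if_false]
  by_cases hx : x = i
  · subst hx; simp [Nat.odd_iff] <;> omega
  · simp [hx, Nat.odd_iff] <;> omega

lemma Sset_shUV (hj : j ∉ Sset d) : Sset (shUV d j) = insert j (Sset d) := by
  rw [mem_Sset, Nat.odd_iff] at hj
  ext x
  simp only [mem_Sset, Finset.mem_insert, shUV_apply, Nat.odd_iff, Sum.inr.injEq, reduceCtorEq,
    if_false]
  by_cases hx : x = j
  · subst hx; simp [Nat.odd_iff] <;> omega
  · simp [hx, Nat.odd_iff] <;> omega

lemma Mset_shUV (hj : j ∈ Uset d) (hj2 : j ∉ Sset d) : Mset (shUV d j) = Mset d := by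
  rw [mem_Uset] at hj
  rw [mem_Sset, Nat.odd_iff] at hj2
  ext x
  simp only [mem_Mset, shUV_apply, Nat.odd_iff, Sum.inr.injEq, Sum.inl.injEq, reduceCtorEq,
    if_false]
  by_cases hx : x = j
  · subst hx; simp [Nat.odd_iff] <;> omega
  · simp [hx, Nat.odd_iff] <;> omega

lemma shUV_shVU_self (hj : j ∈ Sset d) : shUV (shVU d j) j = d := by
  rw [mem_Sset, Nat.odd_iff] at hj
  ext x
  simp only [shUV_apply, shVU_apply]
  rcases x with a | a
  all_goals by_cases hx : a = j
  · subst hx; simp <;> omega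
  · simp [hx] <;> omega
  · subst hx; simp <;> omega
  · simp [hx] <;> omega

lemma shVU_shUV_self (hj : j ∈ Uset d) : shVU (shUV d j) j = d := by
  rw [mem_Uset] at hj
  ext x
  simp only [shUV_apply, shVU_apply]
  rcases x with a | a
  all_goals by_cases hx : a = j
  · subst hx; simp <;> omega
  · simp [hx] <;> omega
  · subst hx; simp <;> omega
  · simp [hx] <;> omega

lemma shUV_shVU_comm (hi : i ∈ Sset d) (hj : j ∈ Uset d) (hij : i ≠ j) :
    shUV (shVU d i) j = shVU (shUV d j) i := by
  rw [mem_Sset, Nat.odd_iff] at hi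
  rw [mem_Uset] at hj
  have hji : j ≠ i := hij.symm
  ext x
  simp only [shUV_apply, shVU_apply]
  rcases x with a | a
  all_goals by_cases hx : a = j
  all_goals by_cases hx2 : a = i
  all_goals first
  | (exfalso; exact hij (hx2 ▸ hx).symm ▸ rfl)
  | (simp [hx, hx2, hij, hji] <;> omega)

end shiftsets


lemma hMon_top (h : Mset d = ∅) : hMon (n := n) d = 0 := by
  rw [hMon, Finset.min_eq_top.mpr h]
  rfl

lemma hMon_coe {j : Fin n} (h : (Mset d).min = (j : WithTop (Fin n))) :
    hMon d = if j ∈ Sset d then 0 else monomial (shUV d j) 1 := by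
  rw [hMon, h]
  rfl

/-- The key homotopy identity on monomials. -/
lemma key (d : Fin n ⊕ Fin n →₀ ℕ) :
    sDer n (hMon d) + hmap (sDer n (monomial d 1)) = monomial d 1 + piMon d := by
  have hterm : ∀ i ∈ Sset d, hmap (monomial (shVU d i) (1 : ZMod 2)) = hMon (shVU d i) := by
    intro i _
    rw [hmap_monomial, one_smul]
  rw [sDer_monomial, map_sum, Finset.sum_congr rfl hterm]
  rcases hmin : (Mset d).min with _ | j
  · -- M = ∅
    have hM : Mset d = ∅ := Finset.min_eq_top.mp hmin
    have hS : Sset d = ∅ := (Finset.union_eq_empty.mp hM).2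
    rw [hMon_top hM, hS, Finset.sum_empty, piMon, if_pos hM, map_zero, zero_add, add_self]
  · have hjM : j ∈ Mset d := Finset.mem_of_min hmin
    have hπ : piMon (n := n) d = 0 := by
      rw [piMon, if_neg (Finset.ne_empty_of_mem hjM)]
    by_cases hjS : j ∈ Sset d
    · -- case B1 : the minimum of M is an odd v-index
      rw [hMon_coe hmin, if_pos hjS, map_zero, zero_add, hπ, add_zero]
      rw [Finset.sum_eq_single_of_mem j hjS]
      · have hmin' : (Mset (shVU d j)).min = (j : WithTop (Fin n)) := by
          rw [Mset_shVU hjS]; exact hmin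
        rw [hMon_coe hmin', if_neg, shUV_shVU_self hjS]
        rw [Sset_shVU hjS]
        simp
      · intro i hi hij
        have hmin' : (Mset (shVU d i)).min = (j : WithTop (Fin n)) := by
          rw [Mset_shVU hi]; exact hmin
        rw [hMon_coe hmin', if_pos]
        rw [Sset_shVU hi]
        exact Finset.mem_sdiff.mpr ⟨hjS, by simpa using hij.symm⟩
    · -- case B2 : the minimum of M is a u-index
      have hjU : j ∈ Uset d := by
        rcases Finset.mem_union.mp hjM with h | h
        · exact h
        · exact absurd h hjS
      rw [hMon_coe hmin, if_neg hjS, sDer_monomial, Sset_shUV hjS, Finset.sum_insert hjS,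
        shVU_shUV_self hjU, hπ, add_zero]
      have hterms : ∀ i ∈ Sset d, hMon (shVU d i) = monomial (shVU (shUV d j) i) 1 := by
        intro i hi
        have hij : i ≠ j := fun h => hjS (h ▸ hi)
        have hmin' : (Mset (shVU d i)).min = (j : WithTop (Fin n)) := by
          rw [Mset_shVU hi]; exact hmin
        rw [hMon_coe hmin', if_neg, shUV_shVU_comm hi hjU hij]
        rw [Sset_shVU hi]
        simp [hjS]
      rw [Finset.sum_congr rfl hterms, add_assoc, add_self, add_zero]


lemma homotopy (p : Cp n) : sDer n (hmap p) + hmap (sDer n p) = p + pimap p := by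
  induction p using MvPolynomial.induction_on' with
  | monomial d a =>
    have e : (monomial d) a = a • monomial d 1 := by
      rw [smul_monomial, smul_eq_mul, mul_one]
    rw [e]
    simp only [Derivation.map_smul, map_smul, hmap_monomial, pimap_monomial, one_smul]
    rw [← smul_add, ← smul_add, key d]
  | add p q hp hq =>
    simp only [map_add]
    linear_combination hp + hq

lemma sDer_X_inl (i : Fin n) : sDer n (X (Sum.inl i)) = 0 := by
  rw [sDer, mkDerivation_X]; rfl

lemma sDer_X_inr (i : Fin n) : sDer n (X (Sum.inr i)) = X (Sum.inl i) := by
  rw [sDer, mkDerivation_X]; rfl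

lemma A_ker : ∀ x ∈ Asub n, sDer n x = 0 := by
  have hle : Asub n ≤ {
      carrier := {x : Cp n | sDer n x = 0}
      mul_mem' := by
        intro a b ha hb
        simp only [Set.mem_setOf_eq] at *
        rw [Derivation.leibniz, ha, hb, smul_zero, smul_zero, add_zero]
      add_mem' := by
        intro a b ha hb
        simp only [Set.mem_setOf_eq] at *
        rw [map_add, ha, hb, add_zero]
      algebraMap_mem' := fun r => Derivation.map_algebraMap _ r
      : Subalgebra (ZMod 2) (Cp n)} := by
    apply Algebra.adjoin_le
    rintro x (⟨i, rfl⟩ | ⟨i, rfl⟩)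
    · exact sDer_X_inl i
    · show sDer n (X (Sum.inr i) ^ 2) = 0
      rw [pow_two, Derivation.leibniz]
      exact add_self _
  exact fun x hx => hle hx

lemma monomial_mem_A (d : Fin n ⊕ Fin n →₀ ℕ) (h : ∀ i : Fin n, Even (d (Sum.inr i))) :
    (monomial d 1 : Cp n) ∈ Asub n := by
  rw [monomial_eq, map_one, one_mul, Finsupp.prod]
  apply prod_mem
  intro x _
  show (X x : Cp n) ^ d x ∈ Asub n
  rcases x with i | i
  · refine pow_mem (Algebra.subset_adjoin (Set.mem_union_left _ ?_)) _
    exact ⟨i, rfl⟩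
  · obtain ⟨m, hm⟩ := h i
    have e : (X (Sum.inr i) : Cp n) ^ (d (Sum.inr i)) = (X (Sum.inr i) ^ 2) ^ m := by
      rw [← pow_mul]
      congr 1
      omega
    rw [e]
    refine pow_mem (Algebra.subset_adjoin (Set.mem_union_right _ ?_)) _
    exact ⟨i, rfl⟩

lemma pimap_mem_A (p : Cp n) : pimap p ∈ Asub n := by
  induction p using MvPolynomial.induction_on' with
  | monomial d a =>
    rw [pimap_monomial]
    apply Subalgebra.smul_mem
    rw [piMon]
    split_ifs with hM
    · apply monomial_mem_A
      intro i
      have hS : Sset d = ∅ := (Finset.union_eq_empty.mp hM).2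
      have : ¬ Odd (d (Sum.inr i)) := by
        intro hodd
        have : i ∈ Sset d := mem_Sset.mpr hodd
        rw [hS] at this
        exact absurd this (Finset.notMem_empty i)
      exact Nat.not_odd_iff_even.mp this
    · exact zero_mem _
  | add p q hp hq =>
    rw [map_add]
    exact add_mem hp hq


/-- the set of generators in the statement -/
def gens (n : ℕ) : Set (Cp n) :=
  insert (1 : MvPolynomial (Fin n ⊕ Fin n) (ZMod 2))
    {x | ∃ T : Finset (Fin n), 2 ≤ T.card ∧
      x = sDer n (∏ i ∈ T, X (Sum.inr i))}

/-- the odd part of the exponent -/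
noncomputable def dS (d : Fin n ⊕ Fin n →₀ ℕ) : Fin n ⊕ Fin n →₀ ℕ :=
  ∑ i ∈ Sset d, Finsupp.single (Sum.inr i) 1

lemma dS_inr (d : Fin n ⊕ Fin n →₀ ℕ) (i : Fin n) :
    dS d (Sum.inr i) = if i ∈ Sset d then 1 else 0 := by
  rw [dS, Finsupp.finset_sum_apply]
  simp [Finsupp.single_apply, Sum.inr.injEq, Finset.sum_ite_eq']

lemma dS_inl (d : Fin n ⊕ Fin n →₀ ℕ) (i : Fin n) : dS d (Sum.inl i) = 0 := by
  rw [dS, Finsupp.finset_sum_apply]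
  simp [Finsupp.single_apply]

lemma dS_le (d : Fin n ⊕ Fin n →₀ ℕ) : dS d ≤ d := by
  rw [Finsupp.le_def]
  intro x
  rcases x with i | i
  · rw [dS_inl]; exact Nat.zero_le _
  · rw [dS_inr]
    split_ifs with h
    · have := mem_Sset.mp h
      rw [Nat.odd_iff] at this
      omega
    · exact Nat.zero_le _

lemma prod_X_S (S : Finset (Fin n)) :
    (∏ i ∈ S, X (Sum.inr i) : Cp n) = monomial (∑ i ∈ S, Finsupp.single (Sum.inr i) 1) 1 := by
  rw [monomial_sum_one]
  rfl

lemma decomp (d : Fin n ⊕ Fin n →₀ ℕ) :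
    (monomial d 1 : Cp n) = monomial (d - dS d) 1 * ∏ i ∈ Sset d, X (Sum.inr i) := by
  rw [prod_X_S, monomial_mul, one_mul, ← dS, tsub_add_cancel_of_le (dS_le d)]

lemma even_rest (d : Fin n ⊕ Fin n →₀ ℕ) (i : Fin n) : Even ((d - dS d) (Sum.inr i)) := by
  rw [Finsupp.tsub_apply, dS_inr]
  by_cases h : i ∈ Sset d
  · have := mem_Sset.mp h
    rw [Nat.odd_iff] at this
    rw [if_pos h, Nat.even_iff]
    omega
  · have : ¬ Odd (d (Sum.inr i)) := fun ho => h (mem_Sset.mpr ho)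
    rw [Nat.not_odd_iff_even] at this
    rw [if_neg h]
    simpa using this

lemma asmul (a : Cp n) (ha : a ∈ Asub n) (x : Cp n) :
    a * x = (⟨a, ha⟩ : Asub n) • x := by
  rw [Subalgebra.smul_def, smul_eq_mul]

lemma u_mem_A (i : Fin n) : (X (Sum.inl i) : Cp n) ∈ Asub n := by
  refine Algebra.subset_adjoin (Set.mem_union_left _ ?_)
  exact ⟨i, rfl⟩

lemma sDer_mem_span (q : Cp n) :
    sDer n q ∈ Submodule.span (Asub n) (gens n) := by
  induction q using MvPolynomial.induction_on' with
  | add p q hp hq =>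
    rw [map_add]
    exact add_mem hp hq
  | monomial d a =>
    rcases zmod2_cases a with rfl | rfl
    · rw [monomial_zero, map_zero]
      exact zero_mem _
    · have hmA : (monomial (d - dS d) 1 : Cp n) ∈ Asub n :=
        monomial_mem_A _ (even_rest d)
      rw [decomp d, Derivation.leibniz, A_ker _ hmA, smul_zero, add_zero, smul_eq_mul,
        asmul _ hmA]
      apply Submodule.smul_mem
      generalize Sset d = S
      by_cases h0 : S = ∅
      · subst h0
        rw [Finset.prod_empty, Derivation.map_one_eq_zero]
        exact zero_mem _
      by_cases h1 : S.card = 1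
      · obtain ⟨i, rfl⟩ := Finset.card_eq_one.mp h1
        rw [Finset.prod_singleton, sDer_X_inr, ← mul_one (X (Sum.inl i) : Cp n),
          asmul _ (u_mem_A i)]
        exact Submodule.smul_mem _ _ (Submodule.subset_span (Set.mem_insert _ _))
      · have h0' : S.card ≠ 0 := fun h => h0 (Finset.card_eq_zero.mp h)
        have hc : 2 ≤ S.card := by omega
        exact Submodule.subset_span (Set.mem_insert_iff.mpr (Or.inr ⟨S, hc, rfl⟩))

lemma sDer_sDer (p : Cp n) : sDer n (sDer n p) = 0 := by
  induction p using MvPolynomial.induction_on with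
  | C a => rw [derivation_C, map_zero]
  | add p q hp hq => rw [map_add, map_add, hp, hq, add_zero]
  | mul_X p i hp =>
    have hX : ∀ x : Fin n ⊕ Fin n, sDer n (sDer n (X x)) = 0 := by
      rintro (i | i)
      · rw [sDer_X_inl, map_zero]
      · rw [sDer_X_inr, sDer_X_inl]
    rw [Derivation.leibniz, map_add]
    simp only [smul_eq_mul]
    rw [Derivation.leibniz, Derivation.leibniz, hp, hX, smul_zero, smul_zero, zero_add,
      zero_add, smul_eq_mul, smul_eq_mul, mul_comm]
    exact add_self _

lemma pimap_mem_span (p : Cp n) :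
    pimap p ∈ Submodule.span (Asub n) (gens n) := by
  rw [← mul_one (pimap p), asmul _ (pimap_mem_A p)]
  exact Submodule.smul_mem _ _ (Submodule.subset_span (Set.mem_insert _ _))

end Stmt5Aux

open Stmt5Aux in
private theorem stmt5_aux (n : ℕ) (c : MvPolynomial (Fin n ⊕ Fin n) (ZMod 2)) :
    sDer n c = 0 ↔
      c ∈ Submodule.span (Asub n)
        (insert (1 : MvPolynomial (Fin n ⊕ Fin n) (ZMod 2))
          {x | ∃ T : Finset (Fin n), 2 ≤ T.card ∧
            x = sDer n (∏ i ∈ T, X (Sum.inr i))}) := by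
  show _ ↔ c ∈ Submodule.span (Asub n) (gens n)
  constructor
  · intro hc
    have h := homotopy c
    rw [hc, map_zero, add_zero] at h
    have hc2 : c = sDer n (hmap c) + pimap c := by
      rw [h, add_assoc, add_self, add_zero]
    rw [hc2]
    exact add_mem (sDer_mem_span _) (pimap_mem_span _)
  · intro hc
    refine Submodule.span_induction ?_ ?_ ?_ ?_ hc
    · rintro x (rfl | ⟨T, _, rfl⟩)
      · exact Derivation.map_one_eq_zero _
      · exact sDer_sDer _
    · exact map_zero _
    · intro x y _ _ hx hy
      rw [map_add, hx, hy, add_zero]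
    · intro a x _ hx
      rw [Subalgebra.smul_def, smul_eq_mul, Derivation.leibniz, hx, smul_zero,
        A_ker _ a.2, smul_zero, add_zero]


/-- `B = ker(s)` is generated as an `A`-module by `1` together with the elements
`s(v_T)` for `T ⊆ {1,…,n}` with `|T| ≥ 2`. -/
theorem stmt5 (n : ℕ) (c : MvPolynomial (Fin n ⊕ Fin n) (ZMod 2)) :
    sDer n c = 0 ↔
      c ∈ Submodule.span (Asub n)
        (insert (1 : MvPolynomial (Fin n ⊕ Fin n) (ZMod 2))
          {x | ∃ T : Finset (Fin n), 2 ≤ T.card ∧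
            x = sDer n (∏ i ∈ T, X (Sum.inr i))}) :=
  stmt5_aux n c
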